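/- Let (Ω, ℱ, P) be a probability space with a filtration (ℱ_n)_{n∈ℕ}, fix h : ℕ and δ ∈ (0,1], and let (X_n)_{n∈ℕ} be a sequence of ℕ-valued random variables such that: (i) X_n is ℱ_n-measurable for every n; (ii) X_0 = 0 and X_n ≤ X_{n+1} ≤ h pointwise; and (iii) for every n, almost surely δ · 1_{{X_n < h}} ≤ E[1_{{X_{n+1} > X_n}} | ℱ_n], i.e., conditioned on the past, the process strictly increases with probability at least δ whenever it is below h. Then P(∃ n, X_n = h) = 1. -/

import Mathlib

open MeasureTheory ProbabilityTheory
open scoped ENNReal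

/-- An adapted, nondecreasing ℕ-valued process starting at `0`, bounded by `h`,
which strictly increases with conditional probability at least `δ` whenever it is
below `h`, almost surely reaches `h`. -/
theorem adapted_progress_reaches_top
    {Ω : Type*} [m : MeasurableSpace Ω]
    (P : Measure Ω) [IsProbabilityMeasure P]
    (ℱ : Filtration ℕ m)
    (h : ℕ) (δ : ℝ) (hδ0 : 0 < δ) (hδ1 : δ ≤ 1)
    (X : ℕ → Ω → ℕ)
    (hadapted : ∀ n, Measurable[ℱ n] (X n))
    (hX0 : ∀ ω, X 0 ω = 0)
    (hmono : ∀ n ω, X n ω ≤ X (n + 1) ω)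
    (hbd : ∀ n ω, X n ω ≤ h)
    (hprog : ∀ n, ∀ᵐ ω ∂P,
      δ * Set.indicator {ω' | X n ω' < h} (fun _ => (1 : ℝ)) ω ≤
        (P[Set.indicator {ω' | X n ω' < X (n + 1) ω'} (fun _ => (1 : ℝ)) | ℱ n]) ω) :
    P {ω | ∃ n, X n ω = h} = 1 := by
  have hXm : ∀ n, Measurable (X n) := fun n => (hadapted n).mono (ℱ.le n) le_rfl
  have hXr : ∀ n, Measurable fun ω => (X n ω : ℝ) :=
    fun n => measurable_from_top.comp (hXm n)
  -- integrability of the real-valued process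
  have hint : ∀ n, Integrable (fun ω => (X n ω : ℝ)) P := by
    intro n
    refine ⟨(hXr n).aestronglyMeasurable, ?_⟩
    refine HasFiniteIntegral.of_bounded (C := (h : ℝ)) (ae_of_all _ fun ω => ?_)
    rw [Real.norm_eq_abs, abs_of_nonneg (by positivity)]
    exact_mod_cast hbd n ω
  set p : ℕ → ℝ := fun n => (P {ω | X n ω < h}).toReal with hp
  have hA : ∀ n, MeasurableSet {ω | X n ω < h} :=
    fun n => measurableSet_lt (hXm n) measurable_const
  have hB : ∀ n, MeasurableSet {ω | X n ω < X (n + 1) ω} :=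
    fun n => measurableSet_lt (hXm n) (hXm (n + 1))
  -- core one-step estimate
  have step : ∀ n, δ * p n ≤ (∫ ω, (X (n+1) ω : ℝ) ∂P) - ∫ ω, (X n ω : ℝ) ∂P := by
    intro n
    have hindA : Integrable ({ω | X n ω < h}.indicator fun _ => (1 : ℝ)) P :=
      (integrable_const 1).indicator (hA n)
    have hindB : Integrable ({ω | X n ω < X (n + 1) ω}.indicator fun _ => (1 : ℝ)) P :=
      (integrable_const 1).indicator (hB n)
    have h1 : ∫ ω, δ * ({ω' | X n ω' < h}.indicator (fun _ => (1 : ℝ)) ω) ∂P ≤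
        ∫ ω, (P[Set.indicator {ω' | X n ω' < X (n + 1) ω'} (fun _ => (1 : ℝ)) | ℱ n]) ω ∂P :=
      integral_mono_ae (hindA.const_mul δ) integrable_condExp (hprog n)
    rw [integral_condExp (ℱ.le n), integral_const_mul,
      integral_indicator_const (1 : ℝ) (hA n), integral_indicator_const (1 : ℝ) (hB n),
      smul_eq_mul, smul_eq_mul, mul_one, mul_one] at h1
    have h2 : (P {ω | X n ω < X (n + 1) ω}).toReal ≤
        ∫ ω, ((X (n+1) ω : ℝ) - X n ω) ∂P := by
      rw [← mul_one (P {ω | X n ω < X (n + 1) ω}).toReal,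
        ← smul_eq_mul, ← measureReal_def, ← integral_indicator_const (1 : ℝ) (hB n)]
      refine integral_mono hindB ((hint (n+1)).sub (hint n)) fun ω => ?_
      by_cases hω : X n ω < X (n + 1) ω
      · simp only [Set.indicator_apply, Set.mem_setOf_eq, if_pos hω]
        have : (X n ω : ℝ) + 1 ≤ X (n+1) ω := by exact_mod_cast hω
        linarith
      · simp only [Set.indicator_apply, Set.mem_setOf_eq, if_neg hω]
        have : (X n ω : ℝ) ≤ X (n+1) ω := by exact_mod_cast hmono n ω
        linarith
    rw [integral_sub (hint (n+1)) (hint n)] at h2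
    exact h1.trans h2
  -- summing up
  have sum_le : ∀ N : ℕ, δ * ∑ k ∈ Finset.range N, p k ≤ (h : ℝ) := by
    intro N
    have tele : δ * ∑ k ∈ Finset.range N, p k ≤ ∫ ω, (X N ω : ℝ) ∂P := by
      induction N with
      | zero => simp [hX0, integral_zero]
      | succ N ih =>
          rw [Finset.sum_range_succ, mul_add]
          have := step N
          linarith
    have hIN : ∫ ω, (X N ω : ℝ) ∂P ≤ (h : ℝ) := by
      calc ∫ ω, (X N ω : ℝ) ∂P ≤ ∫ _, (h : ℝ) ∂P := by
            refine integral_mono (hint N) (integrable_const _) fun ω => ?_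
            show (X N ω : ℝ) ≤ h
            exact_mod_cast hbd N ω
        _ = (h : ℝ) := by simp
    linarith
  -- p is antitone
  have hpanti : ∀ k N : ℕ, k ≤ N → p N ≤ p k := by
    intro k N hkN
    refine ENNReal.toReal_mono (measure_ne_top _ _) (measure_mono fun ω hω => ?_)
    have hmono' : ∀ i j, i ≤ j → X i ω ≤ X j ω := fun i j hij =>
      monotone_nat_of_le_succ (fun n => hmono n ω) hij
    exact lt_of_le_of_lt (hmono' k N hkN) hω
  have hp_nonneg : ∀ n, 0 ≤ p n := fun n => ENNReal.toReal_nonneg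
  -- p N ≤ h / (δ N)
  have hpN : ∀ N : ℕ, 1 ≤ N → p N ≤ (h : ℝ) / δ * (1 / N) := by
    intro N hN
    have h1 : (N : ℝ) * p N ≤ ∑ k ∈ Finset.range N, p k := by
      calc (N : ℝ) * p N = ∑ _k ∈ Finset.range N, p N := by
            simp [Finset.sum_const, mul_comm]
        _ ≤ ∑ k ∈ Finset.range N, p k :=
            Finset.sum_le_sum fun k hk => hpanti k N (le_of_lt (Finset.mem_range.mp hk))
    have h2 : δ * ((N : ℝ) * p N) ≤ (h : ℝ) :=
      le_trans (by nlinarith [sum_le N]) (sum_le N)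
    have hNpos : (0 : ℝ) < N := by exact_mod_cast hN
    rw [show (h : ℝ) / δ * (1 / N) = h / (δ * N) by ring,
      le_div_iff₀ (by positivity)]
    nlinarith [hp_nonneg N]
  -- the never-reaching event has measure zero
  set A : Set Ω := ⋂ n, {ω | X n ω < h} with hAdef
  have hAmeas : MeasurableSet A := MeasurableSet.iInter fun n => hA n
  have hPA : P A = 0 := by
    have hle : ∀ N : ℕ, 1 ≤ N → (P A).toReal ≤ (h : ℝ) / δ * (1 / N) := by
      intro N hN
      refine le_trans ?_ (hpN N hN)
      exact ENNReal.toReal_mono (measure_ne_top _ _)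
        (measure_mono (Set.iInter_subset _ N))
    have hlim : Filter.Tendsto (fun N : ℕ => (h : ℝ) / δ * (1 / N)) Filter.atTop (nhds 0) := by
      simpa using (tendsto_one_div_atTop_nhds_zero_nat.const_mul ((h : ℝ) / δ))
    have h0 : (P A).toReal ≤ 0 :=
      ge_of_tendsto hlim (Filter.eventually_atTop.mpr ⟨1, fun N hN => hle N hN⟩)
    have := le_antisymm h0 ENNReal.toReal_nonneg
    exact (ENNReal.toReal_eq_zero_iff _).mp this |>.resolve_right (measure_ne_top _ _)
  -- conclude
  have hset : {ω | ∃ n, X n ω = h} = Aᶜ := by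
    ext ω
    simp only [hAdef, Set.mem_setOf_eq, Set.compl_iInter, Set.mem_iUnion, Set.mem_compl_iff,
      not_lt]
    constructor
    · rintro ⟨n, hn⟩; exact ⟨n, hn.ge⟩
    · rintro ⟨n, hn⟩; exact ⟨n, le_antisymm (hbd n ω) hn⟩
  rw [hset, prob_compl_eq_one_iff hAmeas]
  exact hPA
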